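/- Let s be a primitive string of length n over Σ, π a context adaptive ordering family, and x a string with |x| < n and Rng(x) ≠ ∅. For every character c ∈ Σ with Rng(xc) ≠ ∅, one has Rng(xc) = { b_x + Σ_{d <_{π_x} c} ℓ_{xd} + t : 0 ≤ t < ℓ_{xc} }, where the sum ranges over all characters d ∈ Σ that are π_x-smaller than c, b_x = min Rng(x), and ℓ_{xd} = |Rng(xd)| (with ℓ_{xd} = 0 when Rng(xd) = ∅). -/

import Mathlib

/-- The cyclic rotation of `s` by `r`: `s[r+1..n] s[1..r]`. -/
def rot {α : Type*} (s : List α) (r : ℕ) : List α := s.drop r ++ s.take r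

/-- A string is primitive if its cyclic rotations are pairwise distinct. -/
def IsPrimitive {α : Type*} (s : List α) : Prop :=
  ∀ r₁ r₂ : ℕ, r₁ < s.length → r₂ < s.length → rot s r₁ = rot s r₂ → r₁ = r₂

/-- The context adaptive order induced by a family `π` of linear orders on the
alphabet, one for each string (context): `u ≺ v` iff, `x = u[1..k] = v[1..k]`
being the longest common prefix of `u` and `v`, the symbol `u[k+1]` is
`π x`-smaller than `v[k+1]`. -/
def caLt {α : Type*} (π : List α → LinearOrder α) (u v : List α) : Prop :=
  ∃ (k : ℕ) (hu : k < u.length) (hv : k < v.length),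
    u.take k = v.take k ∧ (π (u.take k)).lt (u.get ⟨k, hu⟩) (v.get ⟨k, hv⟩)

/-- The matrix `M*(s)`: an enumeration of the cyclic rotations of `s`
listed in `≺`-increasing order; the `i`-th row is `row i`. -/
structure SortedRotMatrix {α : Type*} (π : List α → LinearOrder α) (s : List α) where
  row : Fin s.length → List α
  row_is_rot : ∀ i, ∃ r : Fin s.length, row i = rot s (r : ℕ)
  rot_is_row : ∀ r : Fin s.length, ∃ i, row i = rot s (r : ℕ)
  sorted : ∀ i j : Fin s.length, i < j → caLt π (row i) (row j)

/-- `Rng M x`: the set of row indices of `M*(s)` whose row has `x` as a prefix. -/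
def Rng {α : Type*} [DecidableEq α] {π : List α → LinearOrder α} {s : List α}
    (M : SortedRotMatrix π s) (x : List α) : Finset (Fin s.length) :=
  Finset.univ.filter (fun i => x <+: M.row i)

section AuxRngLemmas
set_option linter.unusedSectionVars false
set_option linter.unusedVariables false
namespace Aux


variable {α : Type*}

lemma take_eq_get {u v : List α} {k j : ℕ} (h : u.take k = v.take k) (hj : j < k)
    (hju : j < u.length) (hjv : j < v.length) : u[j] = v[j] := by
  have h1 : j < (u.take k).length := by simp [List.length_take]; omega
  have h2 : j < (v.take k).length := by simp [List.length_take]; omega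
  calc u[j] = (u.take k)[j] := (List.getElem_take).symm
    _ = (v.take k)[j] := by simp only [h]
    _ = v[j] := List.getElem_take

lemma caLt_mid {π : List α → LinearOrder α} {x u v w : List α}
    (huv : caLt π u v) (hvw : caLt π v w) (hu : x <+: u) (hw : x <+: w) : x <+: v := by
  obtain ⟨k₁, hk₁u, hk₁v, ht₁, hlt₁⟩ := huv
  obtain ⟨k₂, hk₂v, hk₂w, ht₂, hlt₂⟩ := hvw
  simp only [List.get_eq_getElem] at hlt₁ hlt₂
  by_contra hxv
  have h1 : k₁ < x.length := by
    by_contra h; push_neg at h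
    exact hxv (List.prefix_take_iff.mp (ht₁ ▸ (List.prefix_take_iff.mpr ⟨hu, h⟩))).1
  have h2 : k₂ < x.length := by
    by_contra h; push_neg at h
    exact hxv (List.prefix_take_iff.mp (ht₂.symm ▸ (List.prefix_take_iff.mpr ⟨hw, h⟩))).1
  have hxu := hu.length_le
  have hxw := hw.length_le
  rcases lt_trichotomy k₁ k₂ with h | h | h
  · have e1 : v[k₁] = w[k₁] := take_eq_get ht₂ h (by omega) (by omega)
    have e2 : x[k₁] = w[k₁] := hw.getElem h1
    have e3 : x[k₁] = u[k₁] := hu.getElem h1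
    rw [e1, ← e2, e3] at hlt₁
    exact @lt_irrefl α (π (u.take k₁)).toPartialOrder.toPreorder _ hlt₁
  · subst h
    have hctx : u.take k₁ = v.take k₁ := ht₁
    rw [← hctx] at hlt₂
    have e2 : x[k₁] = w[k₁] := hw.getElem h1
    have e3 : x[k₁] = u[k₁] := hu.getElem h1
    letI := π (u.take k₁)
    have : u[k₁] < w[k₁] := lt_trans hlt₁ hlt₂
    rw [← e3, e2] at this
    exact lt_irrefl _ this
  · have e1 : v[k₂] = u[k₂] := (take_eq_get ht₁ h (by omega) (by omega)).symm
    have e2 : x[k₂] = w[k₂] := hw.getElem h2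
    have e3 : x[k₂] = u[k₂] := hu.getElem h2
    rw [e1, ← e3, e2] at hlt₂
    exact @lt_irrefl α (π (v.take k₂)).toPartialOrder.toPreorder _ hlt₂

lemma caLt_char {π : List α → LinearOrder α} {x u v : List α}
    (h : caLt π u v) (hu : x <+: u) (hv : x <+: v)
    (hlu : x.length < u.length) (hlv : x.length < v.length)
    (hne : u[x.length] ≠ v[x.length]) : (π x).lt u[x.length] v[x.length] := by
  obtain ⟨k, hku, hkv, ht, hlt⟩ := h
  simp only [List.get_eq_getElem] at hlt
  rcases lt_trichotomy k x.length with hk | hk | hk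
  · have e1 : x[k] = u[k] := hu.getElem hk
    have e2 : x[k] = v[k] := hv.getElem hk
    rw [← e1, e2, ← e2] at hlt
    exact absurd hlt (@lt_irrefl α (π (u.take k)).toPartialOrder.toPreorder _)
  · subst hk
    have hctx : u.take x.length = x := (List.prefix_iff_eq_take.mp hu).symm
    rwa [hctx] at hlt
  · exact absurd (take_eq_get ht hk hlu hlv) hne

lemma prefix_append_singleton {x l : List α} {d : α} (h : x.length < l.length) :
    x ++ [d] <+: l ↔ x <+: l ∧ l[x.length] = d := by
  constructor
  · intro hp
    have h1 : x <+: l := (List.prefix_append x [d]).trans hp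
    have h2 : (x ++ [d])[x.length]'(by simp) = l[x.length] :=
      hp.getElem (by simp)
    simp at h2
    exact ⟨h1, h2.symm⟩
  · rintro ⟨h1, h2⟩
    rw [List.prefix_iff_eq_take]
    have : l.take (x.length + 1) = l.take x.length ++ [l[x.length]] := by
      rw [List.take_succ]
      simp [List.getElem?_eq_getElem h]
    simp only [List.length_append, List.length_singleton, this, h2,
      ← List.prefix_iff_eq_take.mp h1]

variable {α : Type*} [DecidableEq α] {π : List α → LinearOrder α} {s : List α}
  (M : SortedRotMatrix π s)

lemma row_length (i : Fin s.length) : (M.row i).length = s.length := by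
  obtain ⟨r, hr⟩ := M.row_is_rot i
  have := r.isLt
  simp [hr, rot, List.length_drop, List.length_take]

lemma mem_Rng_iff {x : List α} {i : Fin s.length} : i ∈ Rng M x ↔ x <+: M.row i := by
  simp [Rng]

lemma Rng_convex {x : List α} {i j k : Fin s.length}
    (hi : i ∈ Rng M x) (hk : k ∈ Rng M x) (h1 : i ≤ j) (h2 : j ≤ k) : j ∈ Rng M x := by
  rcases eq_or_lt_of_le h1 with rfl | h1
  · exact hi
  rcases eq_or_lt_of_le h2 with rfl | h2
  · exact hk
  rw [mem_Rng_iff] at *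
  exact caLt_mid (M.sorted _ _ h1) (M.sorted _ _ h2) hi hk

lemma mem_Rng_append {x : List α} (hx : x.length < s.length) {d : α} {i : Fin s.length} :
    i ∈ Rng M (x ++ [d]) ↔ i ∈ Rng M x ∧
      (M.row i)[x.length]'(by rw [row_length]; exact hx) = d := by
  rw [mem_Rng_iff, mem_Rng_iff, prefix_append_singleton (by rw [row_length]; exact hx)]

lemma Rng_append_subset {x : List α} (hx : x.length < s.length) (d : α) :
    Rng M (x ++ [d]) ⊆ Rng M x := fun i hi => ((mem_Rng_append M hx).mp hi).1

lemma char_lt_of_lt {x : List α} (hx : x.length < s.length) {d e : α} {i j : Fin s.length}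
    (hi : i ∈ Rng M (x ++ [d])) (hj : j ∈ Rng M (x ++ [e])) (hij : i < j) (hde : d ≠ e) :
    (π x).lt d e := by
  obtain ⟨hi', hdi⟩ := (mem_Rng_append M hx).mp hi
  obtain ⟨hj', hej⟩ := (mem_Rng_append M hx).mp hj
  rw [mem_Rng_iff] at hi' hj'
  have := caLt_char (M.sorted _ _ hij) hi' hj'
    (by rw [row_length]; exact hx) (by rw [row_length]; exact hx)
    (by rw [hdi, hej]; exact hde)
  rwa [hdi, hej] at this

lemma lt_of_char_lt {x : List α} (hx : x.length < s.length) {d e : α} {i j : Fin s.length}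
    (hi : i ∈ Rng M (x ++ [d])) (hj : j ∈ Rng M (x ++ [e])) (hde : (π x).lt d e) :
    i < j := by
  letI := π x
  have hdne : d ≠ e := ne_of_lt hde
  rcases lt_trichotomy i j with h | h | h
  · exact h
  · subst h
    obtain ⟨_, hdi⟩ := (mem_Rng_append M hx).mp hi
    obtain ⟨_, hej⟩ := (mem_Rng_append M hx).mp hj
    exact absurd (hdi ▸ hej ▸ rfl : d = e) hdne
  · exact absurd (char_lt_of_lt M hx hj hi h (Ne.symm hdne)) (not_lt_of_gt hde)

end Aux
end AuxRngLemmas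

open Aux in
open scoped Classical in
/-- Given `Rng x` nonempty and `c ∈ Σ` with `Rng (xc)` nonempty, the range
`Rng (xc)` is `{ b_x + Σ_{d <_{π_x} c} ℓ_{xd} + t : 0 ≤ t < ℓ_{xc} }`, where
`b_x = min (Rng x)` and `ℓ_{xd} = |Rng (xd)|`. -/
theorem rng_append_char {α : Type*} [Fintype α] [Nonempty α] [DecidableEq α]
    (π : List α → LinearOrder α) (s : List α) (hprim : IsPrimitive s)
    (M : SortedRotMatrix π s) (x : List α) (hx : x.length < s.length)
    (hne : (Rng M x).Nonempty) (c : α) (hc : (Rng M (x ++ [c])).Nonempty) :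
    ∀ i : Fin s.length, i ∈ Rng M (x ++ [c]) ↔
      ∃ t < (Rng M (x ++ [c])).card,
        (i : ℕ) = ((Rng M x).min' hne : ℕ)
          + (∑ d ∈ Finset.univ.filter (fun d => (π x).lt d c), (Rng M (x ++ [d])).card)
          + t := by
  intro i
  set T := Rng M (x ++ [c]) with hT
  set m := T.min' hc with hm
  set mx := T.max' hc with hmx
  set b := (Rng M x).min' hne with hb
  have hmT : m ∈ T := T.min'_mem hc
  have hmxT : mx ∈ T := T.max'_mem hc
  have hmemT : ∀ j : Fin s.length, j ∈ T ↔ m ≤ j ∧ j ≤ mx := by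
    intro j
    exact ⟨fun h => ⟨T.min'_le j h, T.le_max' j h⟩,
      fun ⟨h1, h2⟩ => Rng_convex M hmT hmxT h1 h2⟩
  have hTcard : T.card = (mx : ℕ) + 1 - (m : ℕ) := by
    have hIcc : T = Finset.Icc m mx := by
      ext j; rw [hmemT j, Finset.mem_Icc]
    rw [hIcc, Fin.card_Icc]
  have hmmx : (m : ℕ) ≤ (mx : ℕ) := T.min'_le _ hmxT
  have hbm : (b : ℕ) ≤ (m : ℕ) :=
    (Rng M x).min'_le _ (Rng_append_subset M hx c hmT)
  have hdisj : ∀ d ∈ Finset.univ.filter (fun d => (π x).lt d c),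
      ∀ e ∈ Finset.univ.filter (fun d => (π x).lt d c), d ≠ e →
      Disjoint (Rng M (x ++ [d])) (Rng M (x ++ [e])) := by
    intro d _ e _ hde
    rw [Finset.disjoint_left]
    intro j hjd hje
    obtain ⟨_, h1⟩ := (mem_Rng_append M hx).mp hjd
    obtain ⟨_, h2⟩ := (mem_Rng_append M hx).mp hje
    exact hde (h1 ▸ h2 ▸ rfl)
  have hsplit : Finset.Ico b m =
      (Finset.univ.filter (fun d => (π x).lt d c)).biUnion (fun d => Rng M (x ++ [d])) := by
    ext j
    simp only [Finset.mem_Ico, Finset.mem_biUnion, Finset.mem_filter, Finset.mem_univ, true_and]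
    constructor
    · rintro ⟨h1, h2⟩
      have hjx : j ∈ Rng M x :=
        Rng_convex M ((Rng M x).min'_mem hne) (Rng_append_subset M hx c hmT) h1 (le_of_lt h2)
      have hjd : j ∈ Rng M (x ++ [(M.row j)[x.length]'(by rw [row_length]; exact hx)]) :=
        (mem_Rng_append M hx).mpr ⟨hjx, rfl⟩
      set d := (M.row j)[x.length]'(by rw [row_length]; exact hx) with hd
      have hdc : d ≠ c := by
        intro h
        rw [h] at hjd
        exact absurd (T.min'_le j hjd) (not_le_of_gt h2)
      exact ⟨d, char_lt_of_lt M hx hjd hmT h2 hdc, hjd⟩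
    · rintro ⟨d, hdc, hjd⟩
      exact ⟨(Rng M x).min'_le _ (Rng_append_subset M hx d hjd),
        lt_of_char_lt M hx hjd hmT hdc⟩
  have hScard : (∑ d ∈ Finset.univ.filter (fun d => (π x).lt d c), (Rng M (x ++ [d])).card)
      = (m : ℕ) - (b : ℕ) := by
    rw [← Finset.card_biUnion hdisj, ← hsplit, Fin.card_Ico]
  rw [hmemT i, hTcard, hScard, Fin.le_def, Fin.le_def]
  constructor
  · rintro ⟨h1, h2⟩
    exact ⟨(i : ℕ) - (m : ℕ), by omega, by omega⟩
  · rintro ⟨t, ht, heq⟩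
    omega
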